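/- The 6×6 Spekkens toy theory matrix C_S (with C_S[i][i'] = 1 if i,i' form a matching pair, 0 if opposite pair, 1/2 otherwise, as given explicitly) has rank 4 and admits an exact nonnegative factorization C_S = R·P with R a 6×4 zero-one matrix and P a 4×6 column-stochastic matrix with entries in {0, 1/2}, both of rank 4. -/

import Mathlib

open Matrix

private noncomputable def Cs : Matrix (Fin 6) (Fin 6) ℝ :=
  !![1,0,1/2,1/2,1/2,1/2;
     0,1,1/2,1/2,1/2,1/2;
     1/2,1/2,1,0,1/2,1/2;
     1/2,1/2,0,1,1/2,1/2;
     1/2,1/2,1/2,1/2,1,0;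
     1/2,1/2,1/2,1/2,0,1]

private noncomputable def Rs : Matrix (Fin 6) (Fin 4) ℝ :=
  !![1,0,0,1; 0,1,1,0; 0,0,1,1; 1,1,0,0; 1,0,1,0; 0,1,0,1]

private noncomputable def Ps : Matrix (Fin 4) (Fin 6) ℝ :=
  !![1/2,0,0,1/2,1/2,0;
     0,1/2,0,1/2,0,1/2;
     0,1/2,1/2,0,1/2,0;
     1/2,0,1/2,0,0,1/2]

private lemma spk_fac : Cs = Rs * Ps := by
  ext i j
  fin_cases i <;> fin_cases j <;>
    norm_num [Cs, Rs, Ps, Matrix.mul_apply, Fin.sum_univ_succ, Matrix.transpose_apply, Matrix.vecHead, Matrix.vecTail]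

private lemma spk_isUnit_of_mul_eq_one {A B : Matrix (Fin 4) (Fin 4) ℝ}
    (h : A * B = 1) : IsUnit A := by
  rw [Matrix.isUnit_iff_isUnit_det]
  exact IsUnit.of_mul_eq_one B.det (by rw [← Matrix.det_mul, h, Matrix.det_one])

private lemma spk_rank_R : Rs.rank = 4 := by
  have hRtR : Rsᵀ * Rs = !![3,1,1,1;1,3,1,1;1,1,3,1;1,1,1,3] := by
    ext i j
    fin_cases i <;> fin_cases j <;>
      norm_num [Rs, Matrix.mul_apply, Fin.sum_univ_succ, Matrix.transpose_apply, Matrix.vecHead, Matrix.vecTail]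
  have hU : IsUnit (!![(3:ℝ),1,1,1;1,3,1,1;1,1,3,1;1,1,1,3] : Matrix (Fin 4) (Fin 4) ℝ) := by
    apply spk_isUnit_of_mul_eq_one (B := !![(5:ℝ)/12,-1/12,-1/12,-1/12;
      -1/12,5/12,-1/12,-1/12;-1/12,-1/12,5/12,-1/12;-1/12,-1/12,-1/12,5/12])
    ext i j
    fin_cases i <;> fin_cases j <;>
      norm_num [Matrix.mul_apply, Fin.sum_univ_succ, Matrix.transpose_apply, Matrix.vecHead, Matrix.vecTail, Matrix.one_apply, Fin.ext_iff]
  rw [← Matrix.rank_transpose_mul_self, hRtR]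
  simpa using Matrix.rank_of_isUnit _ hU

private lemma spk_rank_P : Ps.rank = 4 := by
  have hPPt : Ps * Psᵀ =
      !![3/4,1/4,1/4,1/4;1/4,3/4,1/4,1/4;1/4,1/4,3/4,1/4;1/4,1/4,1/4,3/4] := by
    ext i j
    fin_cases i <;> fin_cases j <;>
      norm_num [Ps, Matrix.mul_apply, Fin.sum_univ_succ, Matrix.transpose_apply, Matrix.vecHead, Matrix.vecTail]
  have hU : IsUnit (!![(3:ℝ)/4,1/4,1/4,1/4;1/4,3/4,1/4,1/4;
      1/4,1/4,3/4,1/4;1/4,1/4,1/4,3/4] : Matrix (Fin 4) (Fin 4) ℝ) := by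
    apply spk_isUnit_of_mul_eq_one (B := !![(5:ℝ)/3,-1/3,-1/3,-1/3;
      -1/3,5/3,-1/3,-1/3;-1/3,-1/3,5/3,-1/3;-1/3,-1/3,-1/3,5/3])
    ext i j
    fin_cases i <;> fin_cases j <;>
      norm_num [Matrix.mul_apply, Fin.sum_univ_succ, Matrix.transpose_apply, Matrix.vecHead, Matrix.vecTail, Matrix.one_apply, Fin.ext_iff]
  rw [← Matrix.rank_self_mul_transpose, hPPt]
  simpa using Matrix.rank_of_isUnit _ hU

private noncomputable def Ls : Matrix (Fin 4) (Fin 6) ℝ :=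
  !![1,0,0,0,0,0; 0,1,0,0,0,0; 0,0,1,0,0,0; 0,0,0,0,1,0]

private noncomputable def Ms : Matrix (Fin 6) (Fin 4) ℝ :=
  !![1,0,0,0; 0,1,0,0; 0,0,1,0; 0,0,0,0; 0,0,0,1; 0,0,0,0]

set_option maxHeartbeats 2000000 in
private lemma spk_rank_C : Cs.rank = 4 := by
  apply le_antisymm
  · calc Cs.rank = (Rs * Ps).rank := by rw [spk_fac]
      _ ≤ Ps.rank := Matrix.rank_mul_le_right _ _
      _ ≤ 4 := by simpa using Ps.rank_le_card_height
  · have hD : Ls * Cs * Ms =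
        !![1,0,1/2,1/2; 0,1,1/2,1/2; 1/2,1/2,1,1/2; 1/2,1/2,1/2,1] := by
      ext i j
      fin_cases i <;> fin_cases j <;>
        norm_num [Ls, Ms, Cs, Matrix.mul_apply, Fin.sum_univ_succ, Matrix.transpose_apply, Matrix.vecHead, Matrix.vecTail] <;> simp
    have hU : IsUnit (!![(1:ℝ),0,1/2,1/2; 0,1,1/2,1/2; 1/2,1/2,1,1/2; 1/2,1/2,1/2,1] :
        Matrix (Fin 4) (Fin 4) ℝ) := by
      apply spk_isUnit_of_mul_eq_one (B := !![(2:ℝ),1,-1,-1; 1,2,-1,-1; -1,-1,2,0; -1,-1,0,2])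
      ext i j
      fin_cases i <;> fin_cases j <;>
        norm_num [Matrix.mul_apply, Fin.sum_univ_succ, Matrix.transpose_apply, Matrix.vecHead, Matrix.vecTail, Matrix.one_apply, Fin.ext_iff]
    calc (4 : ℕ)
        = (!![(1:ℝ),0,1/2,1/2; 0,1,1/2,1/2; 1/2,1/2,1,1/2; 1/2,1/2,1/2,1] :
            Matrix (Fin 4) (Fin 4) ℝ).rank := by
          simpa using (Matrix.rank_of_isUnit _ hU).symm
      _ = (Ls * Cs * Ms).rank := by rw [hD]
      _ ≤ (Ls * Cs).rank := Matrix.rank_mul_le_left _ _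
      _ ≤ Cs.rank := Matrix.rank_mul_le_right _ _

/-- Spekkens' toy theory matrix has rank 4 and admits an exact equirank
nonnegative factorization `C_S = R * P` with `R` a 6×4 zero-one matrix and
`P` a 4×6 column-stochastic matrix with entries in `{0, 1/2}`, both of rank 4. -/
theorem spekkens_noncontextual_model
    (C : Matrix (Fin 6) (Fin 6) ℝ)
    (hC : C = !![1,0,1/2,1/2,1/2,1/2;
                 0,1,1/2,1/2,1/2,1/2;
                 1/2,1/2,1,0,1/2,1/2;
                 1/2,1/2,0,1,1/2,1/2;
                 1/2,1/2,1/2,1/2,1,0;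
                 1/2,1/2,1/2,1/2,0,1])
    (R : Matrix (Fin 6) (Fin 4) ℝ)
    (hR : R = !![1,0,0,1; 0,1,1,0; 0,0,1,1; 1,1,0,0; 1,0,1,0; 0,1,0,1])
    (P : Matrix (Fin 4) (Fin 6) ℝ)
    (hP : P = !![1/2,0,0,1/2,1/2,0;
                 0,1/2,0,1/2,0,1/2;
                 0,1/2,1/2,0,1/2,0;
                 1/2,0,1/2,0,0,1/2]) :
    C.rank = 4 ∧ C = R * P ∧
    (∀ i j, R i j = 0 ∨ R i j = 1) ∧
    (∀ i j, P i j = 0 ∨ P i j = 1/2) ∧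
    (∀ i j, 0 ≤ P i j) ∧ (∀ j, ∑ i, P i j = 1) ∧
    R.rank = 4 ∧ P.rank = 4 := by
  have hC' : C = Cs := hC
  have hR' : R = Rs := hR
  have hP' : P = Ps := hP
  subst hC' hR' hP'
  refine ⟨spk_rank_C, spk_fac, ?_, ?_, ?_, ?_, spk_rank_R, spk_rank_P⟩
  · intro i j; fin_cases i <;> fin_cases j <;> norm_num [Rs]
  · intro i j; fin_cases i <;> fin_cases j <;> norm_num [Ps]
  · intro i j; fin_cases i <;> fin_cases j <;> norm_num [Ps]
  · intro j; fin_cases j <;> norm_num [Ps, Fin.sum_univ_succ]
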